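/- Let T* > 0 and 0 < λ̲ ≤ λ̄, and let μ be the exponential distribution with rate 1 on [0,∞). For a measurable λ : [0,T*] → [λ̲,λ̄], define Z^λ : [0,∞) → ℝ by Z^λ(x) = λ(x)·exp(∫₀ˣ (1−λ(s)) ds) for x ≤ T*, and Z^λ(x) = exp(∫₀^{T*} (1−λ(s)) ds) for x > T*, and let P^λ = Z^λ·μ be the measure on [0,∞) with density Z^λ with respect to μ. Then the set 𝒫̄ = { P^λ : λ measurable with λ̲ ≤ λ(s) ≤ λ̄ for all s ∈ [0,T*] } of measures on [0,∞) is convex: for P^{λ'}, P^{λ''} ∈ 𝒫̄ and α ∈ (0,1), there exists a measurable λ : [0,T*] → [λ̲,λ̄] with α·P^{λ'} + (1−α)·P^{λ''} = P^λ. -/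

import Mathlib

open MeasureTheory intervalIntegral Real

/-- The exponential distribution with rate 1 on `[0,∞)`, as a measure on `ℝ`. -/
noncomputable def expMeasure1 : Measure ℝ :=
  (volume.restrict (Set.Ici (0:ℝ))).withDensity (fun x => ENNReal.ofReal (Real.exp (-x)))

/-- The Girsanov-type density of the prior with intensity `l` on the canonical
default-time space. -/
noncomputable def densityZ (Tstar : ℝ) (l : ℝ → ℝ) (x : ℝ) : ℝ :=
  if x ≤ Tstar then l x * Real.exp (∫ s in (0:ℝ)..x, (1 - l s))
  else Real.exp (∫ s in (0:ℝ)..Tstar, (1 - l s))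

/-- The prior `P^λ` under which the canonical default time has intensity `l`. -/
noncomputable def priorP (Tstar : ℝ) (l : ℝ → ℝ) : Measure ℝ :=
  expMeasure1.withDensity (fun x => ENNReal.ofReal (densityZ Tstar l x))

open Filter Set Topology

/-- Exponential of the primitive of `1 - k`. -/
noncomputable def EE (k : ℝ → ℝ) (s : ℝ) : ℝ := Real.exp (∫ t in (0:ℝ)..s, (1 - k t))

/-- The mixed intensity. -/
noncomputable def lmix (a b : ℝ) (k1 k2 : ℝ → ℝ) (s : ℝ) : ℝ :=
  (a * k1 s * EE k1 s + b * k2 s * EE k2 s) / (a * EE k1 s + b * EE k2 s)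

lemma EE_pos (k : ℝ → ℝ) (s : ℝ) : 0 < EE k s := Real.exp_pos _

lemma denom_pos {a b : ℝ} (ha : 0 < a) (hb : 0 < b) (k1 k2 : ℝ → ℝ) (s : ℝ) :
    0 < a * EE k1 s + b * EE k2 s := by
  nlinarith [EE_pos k1 s, EE_pos k2 s]

lemma lmix_mem {L U a b : ℝ} (ha : 0 < a) (hb : 0 < b) {k1 k2 : ℝ → ℝ} {s : ℝ}
    (h1 : k1 s ∈ Set.Icc L U) (h2 : k2 s ∈ Set.Icc L U) :
    lmix a b k1 k2 s ∈ Set.Icc L U := by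
  have e1 := EE_pos k1 s
  have e2 := EE_pos k2 s
  have hD := denom_pos ha hb k1 k2 s
  constructor
  · rw [lmix, le_div_iff₀ hD]
    nlinarith [mul_le_mul_of_nonneg_right h1.1 (mul_pos ha e1).le,
      mul_le_mul_of_nonneg_right h2.1 (mul_pos hb e2).le]
  · rw [lmix, div_le_iff₀ hD]
    nlinarith [mul_le_mul_of_nonneg_right h1.2 (mul_pos ha e1).le,
      mul_le_mul_of_nonneg_right h2.2 (mul_pos hb e2).le]

lemma abs_lmix_le {L U a b : ℝ} (ha : 0 < a) (hb : 0 < b) {k1 k2 : ℝ → ℝ} {s : ℝ}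
    (h1 : k1 s ∈ Set.Icc L U) (h2 : k2 s ∈ Set.Icc L U) :
    |1 - lmix a b k1 k2 s| ≤ 1 + max |L| |U| := by
  have h := lmix_mem ha hb h1 h2
  have hL : -(max |L| |U|) ≤ L := by
    have h1 := neg_abs_le L; have h2 := le_max_left |L| |U|; linarith
  have hU : U ≤ max |L| |U| := (le_abs_self U).trans (le_max_right _ _)
  rw [abs_le]
  exact ⟨by linarith [h.2], by linarith [h.1]⟩

lemma one_sub_lmix {a b : ℝ} (ha : 0 < a) (hb : 0 < b) (k1 k2 : ℝ → ℝ) (s : ℝ) :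
    1 - lmix a b k1 k2 s =
      (a * EE k1 s * (1 - k1 s) + b * EE k2 s * (1 - k2 s)) / (a * EE k1 s + b * EE k2 s) := by
  have hD := (denom_pos ha hb k1 k2 s).ne'
  rw [lmix]
  field_simp
  ring

lemma intervalIntegrable_of_bdd {f : ℝ → ℝ} (hf : AEStronglyMeasurable f volume) {C : ℝ}
    (hC : ∀ s, |f s| ≤ C) (a b : ℝ) : IntervalIntegrable f volume a b := by
  rw [intervalIntegrable_iff]
  exact Measure.integrableOn_of_bounded (measure_Ioc_lt_top).ne hf (ae_of_all _ fun s => hC s)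

lemma continuous_EE {k : ℝ → ℝ} (hk : AEStronglyMeasurable k volume) {C : ℝ}
    (hC : ∀ s, |k s| ≤ C) : Continuous (EE k) := by
  have : Continuous fun s => ∫ t in (0:ℝ)..s, (1 - k t) := by
    apply intervalIntegral.continuous_primitive
    intro a b
    refine intervalIntegrable_of_bdd (aestronglyMeasurable_const.sub hk) (C := 1 + C)
      (fun s => ?_) a b
    calc |1 - k s| ≤ |(1:ℝ)| + |k s| := abs_sub _ _
    _ ≤ 1 + C := by simpa using hC s
  exact Real.continuous_exp.comp this


lemma continuous_EE_of_continuous {k : ℝ → ℝ} (hk : Continuous k) : Continuous (EE k) :=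
  Real.continuous_exp.comp (intervalIntegral.continuous_primitive
    (fun a b => (continuous_const.sub hk).intervalIntegrable a b) 0)

lemma MI_cont {a b : ℝ} (ha : 0 < a) (hb : 0 < b) (hab : a + b = 1)
    {k1 k2 : ℝ → ℝ} (hk1 : Continuous k1) (hk2 : Continuous k2) (x : ℝ) :
    ∫ s in (0:ℝ)..x, (1 - lmix a b k1 k2 s) =
      Real.log (a * EE k1 x + b * EE k2 x) := by
  have hP1 : ∀ s : ℝ, HasDerivAt (fun u => ∫ t in (0:ℝ)..u, (1 - k1 t)) (1 - k1 s) s :=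
    fun s => ((continuous_const.sub hk1).integral_hasStrictDerivAt 0 s).hasDerivAt
  have hP2 : ∀ s : ℝ, HasDerivAt (fun u => ∫ t in (0:ℝ)..u, (1 - k2 t)) (1 - k2 s) s :=
    fun s => ((continuous_const.sub hk2).integral_hasStrictDerivAt 0 s).hasDerivAt
  have hE1 : ∀ s : ℝ, HasDerivAt (EE k1) (EE k1 s * (1 - k1 s)) s := fun s => (hP1 s).exp
  have hE2 : ∀ s : ℝ, HasDerivAt (EE k2) (EE k2 s * (1 - k2 s)) s := fun s => (hP2 s).exp
  have hlog : ∀ s, HasDerivAt (fun u => Real.log (a * EE k1 u + b * EE k2 u))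
      (1 - lmix a b k1 k2 s) s := by
    intro s
    have h := (((hE1 s).const_mul a).add ((hE2 s).const_mul b)).log
      (denom_pos ha hb k1 k2 s).ne'
    have e : (a * (EE k1 s * (1 - k1 s)) + b * (EE k2 s * (1 - k2 s))) /
        (a * EE k1 s + b * EE k2 s) = 1 - lmix a b k1 k2 s := by
      rw [one_sub_lmix ha hb]; ring_nf
    simp only [Pi.add_apply] at h
    rwa [e] at h
  have hcont : Continuous fun s => 1 - lmix a b k1 k2 s := by
    have hE1c : Continuous (EE k1) := continuous_EE_of_continuous hk1
    have hE2c : Continuous (EE k2) := continuous_EE_of_continuous hk2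
    have : Continuous (lmix a b k1 k2) := by
      apply Continuous.div
      · exact ((continuous_const.mul hk1).mul hE1c).add ((continuous_const.mul hk2).mul hE2c)
      · exact (continuous_const.mul hE1c).add (continuous_const.mul hE2c)
      · exact fun s => (denom_pos ha hb k1 k2 s).ne'
    exact continuous_const.sub this
  have key := intervalIntegral.integral_eq_sub_of_hasDerivAt
      (f := fun u => Real.log (a * EE k1 u + b * EE k2 u))
      (f' := fun s => 1 - lmix a b k1 k2 s)
      (fun s _ => hlog s) (hcont.intervalIntegrable 0 x)
  have h0 : Real.log (a * EE k1 0 + b * EE k2 0) = 0 := by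
    simp [EE, hab]
  rw [key]; simp only [h0, sub_zero]


lemma approx_band {L U : ℝ} (hLU : L ≤ U) {m : ℝ → ℝ} (hm : Measurable m)
    (hband : ∀ s, m s ∈ Set.Icc L U) (x : ℝ) :
    ∃ k : ℕ → ℝ → ℝ, (∀ n, Continuous (k n)) ∧ (∀ n s, k n s ∈ Set.Icc L U) ∧
      ∀ᵐ s ∂(volume.restrict (Set.Ioc 0 x)),
        Tendsto (fun n => k n s) atTop (𝓝 (m s)) := by
  classical
  set M : ℝ := max |L| |U| with hM
  have habs : ∀ s, |m s| ≤ M := fun s => abs_le.mpr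
    ⟨by have h1 := neg_abs_le L; have h2 := le_max_left |L| |U|; have := (hband s).1; simp only [hM]; linarith,
     (hband s).2.trans ((le_abs_self U).trans (le_max_right _ _))⟩
  set g : ℝ → ℝ := (Set.Ioc (0:ℝ) x).indicator m with hg
  have hgmeas : Measurable g := hm.indicator measurableSet_Ioc
  have hgint : Integrable g volume := by
    rw [hg, integrable_indicator_iff measurableSet_Ioc]
    exact Measure.integrableOn_of_bounded (measure_Ioc_lt_top).ne hm.aestronglyMeasurable
      (ae_of_all _ fun s => habs s)
  have hgmem : MemLp g 1 volume := memLp_one_iff_integrable.mpr hgint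
  have H : ∀ n : ℕ, ∃ φ : ℝ → ℝ,
      eLpNorm (g - φ) 1 volume ≤ ENNReal.ofReal (((n:ℝ)+1)⁻¹) ∧ Continuous φ := by
    intro n
    obtain ⟨φ, _, hle, hcont, _⟩ := hgmem.exists_hasCompactSupport_eLpNorm_sub_le
      ENNReal.one_ne_top (ε := ENNReal.ofReal (((n:ℝ)+1)⁻¹))
      (by simp [ENNReal.ofReal_eq_zero, not_le]; positivity)
    exact ⟨φ, hle, hcont⟩
  choose φ hφle hφcont using H
  have htend0 : Tendsto (fun n => eLpNorm (φ n - g) 1 volume) atTop (𝓝 0) := by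
    have hub : Tendsto (fun n : ℕ => ENNReal.ofReal (((n:ℝ)+1)⁻¹)) atTop (𝓝 0) := by
      rw [← ENNReal.ofReal_zero]
      apply ENNReal.tendsto_ofReal
      simpa [one_div] using tendsto_one_div_add_atTop_nhds_zero_nat (𝕜 := ℝ)
    apply tendsto_of_tendsto_of_tendsto_of_le_of_le tendsto_const_nhds hub
      (fun n => zero_le)
    intro n
    simp only []
    rw [eLpNorm_sub_comm]
    exact hφle n
  have hmeas : TendstoInMeasure volume φ atTop g :=
    tendstoInMeasure_of_tendsto_eLpNorm_of_ne_top one_ne_zero ENNReal.one_ne_top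
      (fun n => (hφcont n).aestronglyMeasurable) hgmeas.aestronglyMeasurable htend0
  obtain ⟨ns, _, hae⟩ := hmeas.exists_seq_tendsto_ae
  have htrunc : Continuous fun t : ℝ => min U (max L t) :=
    continuous_const.min (continuous_const.max continuous_id)
  refine ⟨fun i s => min U (max L (φ (ns i) s)),
    fun i => htrunc.comp (hφcont (ns i)),
    fun i s => ⟨le_min hLU (le_max_left _ _), min_le_left _ _⟩, ?_⟩
  filter_upwards [ae_restrict_of_ae hae, ae_restrict_mem measurableSet_Ioc] with s hs hsmem
  have hgs : g s = m s := Set.indicator_of_mem hsmem m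
  rw [hgs] at hs
  have h2 : Tendsto (fun i => min U (max L (φ (ns i) s))) atTop
      (𝓝 (min U (max L (m s)))) := (htrunc.tendsto (m s)).comp hs
  rwa [max_eq_right (hband s).1, min_eq_right (hband s).2] at h2


lemma abs_le_maxabs {L U v : ℝ} (h : v ∈ Set.Icc L U) : |v| ≤ max |L| |U| := by
  rw [abs_le]
  constructor
  · have h1 := neg_abs_le L; have h2 := le_max_left |L| |U|; have := h.1; linarith
  · exact h.2.trans ((le_abs_self U).trans (le_max_right _ _))

lemma continuous_one_sub_lmix {a b : ℝ} (ha : 0 < a) (hb : 0 < b)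
    {k1 k2 : ℝ → ℝ} (hk1 : Continuous k1) (hk2 : Continuous k2) :
    Continuous fun s => 1 - lmix a b k1 k2 s := by
  have hE1c : Continuous (EE k1) := continuous_EE_of_continuous hk1
  have hE2c : Continuous (EE k2) := continuous_EE_of_continuous hk2
  have : Continuous (lmix a b k1 k2) := by
    apply Continuous.div
    · exact ((continuous_const.mul hk1).mul hE1c).add ((continuous_const.mul hk2).mul hE2c)
    · exact (continuous_const.mul hE1c).add (continuous_const.mul hE2c)
    · exact fun s => (denom_pos ha hb k1 k2 s).ne'
  exact continuous_const.sub this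

lemma EE_tendsto {L U : ℝ} {k : ℝ → ℝ} {kn : ℕ → ℝ → ℝ}
    (hkn : ∀ n, Continuous (kn n)) (hknb : ∀ n s, kn n s ∈ Set.Icc L U)
    {x : ℝ}
    (hae : ∀ᵐ s ∂(volume.restrict (Set.Ioc 0 x)),
      Tendsto (fun n => kn n s) atTop (𝓝 (k s)))
    {s : ℝ} (hs0 : 0 ≤ s) (hsx : s ≤ x) :
    Tendsto (fun n => EE (kn n) s) atTop (𝓝 (EE k s)) := by
  have hint : Tendsto (fun n => ∫ t in Set.Ioc 0 s, (1 - kn n t))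
      atTop (𝓝 (∫ t in Set.Ioc 0 s, (1 - k t))) := by
    apply tendsto_integral_of_dominated_convergence (fun _ => 1 + max |L| |U|)
    · exact fun n => (continuous_const.sub (hkn n)).aestronglyMeasurable
    · exact integrableOn_const measure_Ioc_lt_top.ne
    · intro n
      refine ae_of_all _ fun t => ?_
      have hb := abs_le_maxabs (hknb n t)
      calc ‖1 - kn n t‖ ≤ |(1:ℝ)| + |kn n t| := abs_sub _ _
        _ ≤ 1 + max |L| |U| := by rw [abs_one]; linarith
    · have hmono : ae (volume.restrict (Set.Ioc 0 s)) ≤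
          ae (volume.restrict (Set.Ioc (0:ℝ) x)) :=
        ae_mono (Measure.restrict_mono (Set.Ioc_subset_Ioc_right hsx) le_rfl)
      filter_upwards [hae.filter_mono hmono] with t ht
      exact tendsto_const_nhds.sub ht
  have h1 : ∀ (f : ℝ → ℝ), ∫ t in (0:ℝ)..s, f t = ∫ t in Set.Ioc 0 s, f t :=
    fun f => intervalIntegral.integral_of_le hs0
  simp only [EE, h1]
  exact (Real.continuous_exp.tendsto _).comp hint

lemma MI_meas {L U a b : ℝ} (hLU : L ≤ U) (ha : 0 < a) (hb : 0 < b) (hab : a + b = 1)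
    {k1 k2 : ℝ → ℝ} (h1 : Measurable k1) (h2 : Measurable k2)
    (hband1 : ∀ s, k1 s ∈ Set.Icc L U) (hband2 : ∀ s, k2 s ∈ Set.Icc L U)
    {x : ℝ} (hx : 0 ≤ x) :
    ∫ s in (0:ℝ)..x, (1 - lmix a b k1 k2 s) = Real.log (a * EE k1 x + b * EE k2 x) := by
  obtain ⟨p, pcont, pband, pae⟩ := approx_band hLU h1 hband1 x
  obtain ⟨q, qcont, qband, qae⟩ := approx_band hLU h2 hband2 x
  have hEp : ∀ s, 0 ≤ s → s ≤ x → Tendsto (fun n => EE (p n) s) atTop (𝓝 (EE k1 s)) :=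
    fun s hs0 hsx => EE_tendsto pcont pband pae hs0 hsx
  have hEq : ∀ s, 0 ≤ s → s ≤ x → Tendsto (fun n => EE (q n) s) atTop (𝓝 (EE k2 s)) :=
    fun s hs0 hsx => EE_tendsto qcont qband qae hs0 hsx
  have hRHS : Tendsto (fun n => Real.log (a * EE (p n) x + b * EE (q n) x)) atTop
      (𝓝 (Real.log (a * EE k1 x + b * EE k2 x))) := by
    have hd : Tendsto (fun n => a * EE (p n) x + b * EE (q n) x) atTop
        (𝓝 (a * EE k1 x + b * EE k2 x)) :=
      (tendsto_const_nhds.mul (hEp x hx le_rfl)).add (tendsto_const_nhds.mul (hEq x hx le_rfl))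
    exact ((Real.continuousAt_log (denom_pos ha hb k1 k2 x).ne').tendsto).comp hd
  have hLHS : Tendsto (fun n => ∫ s in (0:ℝ)..x, (1 - lmix a b (p n) (q n) s)) atTop
      (𝓝 (∫ s in (0:ℝ)..x, (1 - lmix a b k1 k2 s))) := by
    have h1' : ∀ (f : ℝ → ℝ), ∫ t in (0:ℝ)..x, f t = ∫ t in Set.Ioc 0 x, f t :=
      fun f => intervalIntegral.integral_of_le hx
    simp only [h1']
    apply tendsto_integral_of_dominated_convergence (fun _ => 1 + max |L| |U|)
    · exact fun n => (continuous_one_sub_lmix ha hb (pcont n) (qcont n)).aestronglyMeasurable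
    · exact integrableOn_const measure_Ioc_lt_top.ne
    · exact fun n => ae_of_all _ fun s => abs_lmix_le ha hb (pband n s) (qband n s)
    · filter_upwards [pae, qae, ae_restrict_mem measurableSet_Ioc] with s hp hq hsmem
      have hep := hEp s hsmem.1.le hsmem.2
      have heq := hEq s hsmem.1.le hsmem.2
      have hnum : Tendsto (fun n => a * p n s * EE (p n) s + b * q n s * EE (q n) s) atTop
          (𝓝 (a * k1 s * EE k1 s + b * k2 s * EE k2 s)) :=
        ((tendsto_const_nhds.mul hp).mul hep).add ((tendsto_const_nhds.mul hq).mul heq)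
      have hden : Tendsto (fun n => a * EE (p n) s + b * EE (q n) s) atTop
          (𝓝 (a * EE k1 s + b * EE k2 s)) :=
        (tendsto_const_nhds.mul hep).add (tendsto_const_nhds.mul heq)
      have hdiv : Tendsto (fun n => lmix a b (p n) (q n) s) atTop
          (𝓝 (lmix a b k1 k2 s)) := hnum.div hden (denom_pos ha hb k1 k2 s).ne'
      exact tendsto_const_nhds.sub hdiv
  have heach : ∀ n, ∫ s in (0:ℝ)..x, (1 - lmix a b (p n) (q n) s) =
      Real.log (a * EE (p n) x + b * EE (q n) x) :=
    fun n => MI_cont ha hb hab (pcont n) (qcont n) x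
  simp only [heach] at hLHS
  exact tendsto_nhds_unique hLHS hRHS

theorem stmt13 (Tstar lamL lamU : ℝ) (hT : 0 < Tstar) (hL : 0 < lamL) (hLU : lamL ≤ lamU)
    (l1 l2 : ℝ → ℝ) (hm1 : Measurable l1) (hm2 : Measurable l2)
    (hb1 : ∀ s ∈ Set.Icc (0:ℝ) Tstar, l1 s ∈ Set.Icc lamL lamU)
    (hb2 : ∀ s ∈ Set.Icc (0:ℝ) Tstar, l2 s ∈ Set.Icc lamL lamU)
    (α : ℝ) (hα : α ∈ Set.Ioo (0:ℝ) 1) :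
    ∃ l : ℝ → ℝ, Measurable l ∧
      (∀ s ∈ Set.Icc (0:ℝ) Tstar, l s ∈ Set.Icc lamL lamU) ∧
      ENNReal.ofReal α • priorP Tstar l1 + ENNReal.ofReal (1 - α) • priorP Tstar l2 =
        priorP Tstar l := by
  classical
  obtain ⟨hα0, hα1⟩ := hα
  have hb' : (0:ℝ) < 1 - α := by linarith
  -- truncated intensities, globally in the band
  set m1 : ℝ → ℝ := fun s => min lamU (max lamL (l1 s)) with hm1def
  set m2 : ℝ → ℝ := fun s => min lamU (max lamL (l2 s)) with hm2def
  have hm1' : Measurable m1 := measurable_const.min (measurable_const.max hm1)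
  have hm2' : Measurable m2 := measurable_const.min (measurable_const.max hm2)
  have hm1b : ∀ s, m1 s ∈ Set.Icc lamL lamU :=
    fun s => ⟨le_min hLU (le_max_left _ _), min_le_left _ _⟩
  have hm2b : ∀ s, m2 s ∈ Set.Icc lamL lamU :=
    fun s => ⟨le_min hLU (le_max_left _ _), min_le_left _ _⟩
  have hm1eq : ∀ s ∈ Set.Icc (0:ℝ) Tstar, m1 s = l1 s := by
    intro s hs
    show min lamU (max lamL (l1 s)) = l1 s
    rw [max_eq_right (hb1 s hs).1, min_eq_right (hb1 s hs).2]
  have hm2eq : ∀ s ∈ Set.Icc (0:ℝ) Tstar, m2 s = l2 s := by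
    intro s hs
    show min lamU (max lamL (l2 s)) = l2 s
    rw [max_eq_right (hb2 s hs).1, min_eq_right (hb2 s hs).2]
  -- a.e. nonnegativity under expMeasure1
  have hae0 : ∀ᵐ x ∂expMeasure1, (0:ℝ) ≤ x := by
    have h1 : ∀ᵐ x ∂(volume.restrict (Set.Ici (0:ℝ))), (0:ℝ) ≤ x :=
      ae_restrict_mem measurableSet_Ici
    exact h1.filter_mono (withDensity_absolutelyContinuous _ _).ae_le
  -- replacing the intensities by their truncations does not change the priors
  have hdens : ∀ (l m : ℝ → ℝ), (∀ s ∈ Set.Icc (0:ℝ) Tstar, m s = l s) →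
      ∀ x : ℝ, 0 ≤ x → densityZ Tstar l x = densityZ Tstar m x := by
    intro l m hml x hx
    have hcong : ∀ y : ℝ, 0 ≤ y → y ≤ Tstar →
        (∫ s in (0:ℝ)..y, (1 - l s)) = ∫ s in (0:ℝ)..y, (1 - m s) := by
      intro y hy0 hyT
      apply intervalIntegral.integral_congr
      intro t ht
      rw [Set.uIcc_of_le hy0] at ht
      show 1 - l t = 1 - m t
      rw [hml t ⟨ht.1, ht.2.trans hyT⟩]
    unfold densityZ
    split_ifs with h
    · rw [hml x ⟨hx, h⟩, hcong x hx h]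
    · rw [hcong Tstar hT.le le_rfl]
  have hP1eq : priorP Tstar l1 = priorP Tstar m1 := by
    unfold priorP
    apply withDensity_congr_ae
    filter_upwards [hae0] with x hx
    rw [hdens l1 m1 hm1eq x hx]
  have hP2eq : priorP Tstar l2 = priorP Tstar m2 := by
    unfold priorP
    apply withDensity_congr_ae
    filter_upwards [hae0] with x hx
    rw [hdens l2 m2 hm2eq x hx]
  -- continuity/measurability of the basic objects
  have hE1c : Continuous (EE m1) :=
    continuous_EE hm1'.aestronglyMeasurable (fun s => abs_le_maxabs (hm1b s))
  have hE2c : Continuous (EE m2) :=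
    continuous_EE hm2'.aestronglyMeasurable (fun s => abs_le_maxabs (hm2b s))
  have hlmeas : Measurable (lmix α (1-α) m1 m2) := by
    apply Measurable.div
    · exact ((measurable_const.mul hm1').mul hE1c.measurable).add
        ((measurable_const.mul hm2').mul hE2c.measurable)
    · exact (measurable_const.mul hE1c.measurable).add (measurable_const.mul hE2c.measurable)
  -- the key identity
  have hkey : ∀ y : ℝ, 0 ≤ y →
      Real.exp (∫ s in (0:ℝ)..y, (1 - lmix α (1-α) m1 m2 s)) =
        α * EE m1 y + (1-α) * EE m2 y := by
    intro y hy
    rw [MI_meas hLU hα0 hb' (by ring) hm1' hm2' hm1b hm2b hy]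
    exact Real.exp_log (denom_pos hα0 hb' m1 m2 y)
  -- density measurability
  have hd1meas : Measurable fun x => ENNReal.ofReal (densityZ Tstar m1 x) := by
    apply ENNReal.measurable_ofReal.comp
    unfold densityZ
    exact Measurable.ite (measurableSet_le measurable_id measurable_const)
      (hm1'.mul hE1c.measurable) measurable_const
  have hd2meas : Measurable fun x => ENNReal.ofReal (densityZ Tstar m2 x) := by
    apply ENNReal.measurable_ofReal.comp
    unfold densityZ
    exact Measurable.ite (measurableSet_le measurable_id measurable_const)
      (hm2'.mul hE2c.measurable) measurable_const
  refine ⟨lmix α (1-α) m1 m2, hlmeas,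
    fun s _ => lmix_mem hα0 hb' (hm1b s) (hm2b s), ?_⟩
  rw [hP1eq, hP2eq]
  unfold priorP
  rw [← withDensity_smul' (ENNReal.ofReal α) _ ENNReal.ofReal_ne_top,
      ← withDensity_smul' (ENNReal.ofReal (1-α)) _ ENNReal.ofReal_ne_top,
      ← withDensity_add_left (hd1meas.const_smul (ENNReal.ofReal α))]
  apply withDensity_congr_ae
  filter_upwards [hae0] with x hx
  simp only [Pi.add_apply, Pi.smul_apply, smul_eq_mul]
  have e1 := EE_pos m1 x
  have e2 := EE_pos m2 x
  have hm1pos : 0 < m1 x := lt_of_lt_of_le hL (hm1b x).1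
  have hm2pos : 0 < m2 x := lt_of_lt_of_le hL (hm2b x).1
  unfold densityZ
  split_ifs with h
  · show ENNReal.ofReal α * ENNReal.ofReal (m1 x * EE m1 x) +
        ENNReal.ofReal (1-α) * ENNReal.ofReal (m2 x * EE m2 x) =
      ENNReal.ofReal (lmix α (1-α) m1 m2 x *
        Real.exp (∫ s in (0:ℝ)..x, (1 - lmix α (1-α) m1 m2 s)))
    rw [hkey x hx, ← ENNReal.ofReal_mul hα0.le, ← ENNReal.ofReal_mul hb'.le,
      ← ENNReal.ofReal_add (mul_nonneg hα0.le (mul_nonneg hm1pos.le e1.le))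
        (mul_nonneg hb'.le (mul_nonneg hm2pos.le e2.le))]
    congr 1
    rw [lmix, div_mul_cancel₀ _ (denom_pos hα0 hb' m1 m2 x).ne']
    ring
  · show ENNReal.ofReal α * ENNReal.ofReal (EE m1 Tstar) +
        ENNReal.ofReal (1-α) * ENNReal.ofReal (EE m2 Tstar) =
      ENNReal.ofReal (Real.exp (∫ s in (0:ℝ)..Tstar, (1 - lmix α (1-α) m1 m2 s)))
    rw [hkey Tstar hT.le, ← ENNReal.ofReal_mul hα0.le, ← ENNReal.ofReal_mul hb'.le,
      ← ENNReal.ofReal_add (mul_nonneg hα0.le (EE_pos m1 Tstar).le)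
        (mul_nonneg hb'.le (EE_pos m2 Tstar).le)]
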